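/- Let 1 ≤ m ≤ N, let S_m be a uniformly random m-element subset of [N], and let S̃ ⊆ [N] be formed by including each element of [N] independently with probability δ = m/N. Then for every family E of subsets of [N], P[S_m ∈ E] ≤ C·√m · P[S̃ ∈ E] for an absolute constant C (Pittel's inequality). -/

import Mathlib

open Real Stirling

lemma stir_le (n : ℕ) : stirlingSeq (n+1) ≤ Real.exp 1 / Real.sqrt 2 := by
  have := stirlingSeq'_antitone (Nat.zero_le n)
  simpa using this

lemma stir_ge (n : ℕ) : Real.sqrt π ≤ stirlingSeq (n+1) := by
  exact stirlingSeq'_antitone.le_of_tendsto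
    (tendsto_stirlingSeq_sqrt_pi.comp (Filter.tendsto_add_atTop_nat 1)) n

lemma fact_eq (n : ℕ) (hn : 1 ≤ n) :
    (Nat.factorial n : ℝ) = stirlingSeq n * (Real.sqrt (2*n) * ((n : ℝ) / Real.exp 1)^n) := by
  have h : (0:ℝ) < Real.sqrt (2*n) * ((n : ℝ) / Real.exp 1)^n := by
    have : (0:ℝ) < n := by exact_mod_cast hn
    positivity
  rw [stirlingSeq]
  field_simp

lemma key_id (a b : ℕ) (ha : 1 ≤ a) (hb : 1 ≤ b) :
    (((a+b).choose a : ℝ) * ((a:ℝ)/(a+b))^a * ((b:ℝ)/(a+b))^b)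
      = stirlingSeq (a+b) * Real.sqrt (2*(a+b))
        / (stirlingSeq a * Real.sqrt (2*a) * (stirlingSeq b * Real.sqrt (2*b))) := by
  have hab : 1 ≤ a + b := le_trans ha (Nat.le_add_right a b)
  have hc := Nat.cast_choose ℝ (Nat.le_add_right a b)
  rw [Nat.add_sub_cancel_left] at hc
  have h0a : (0:ℝ) < a := by exact_mod_cast ha
  have h0b : (0:ℝ) < b := by exact_mod_cast hb
  have h0ab : (0:ℝ) < (a:ℝ) + b := by linarith
  have stir_pos : ∀ n : ℕ, 1 ≤ n → 0 < stirlingSeq n := by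
    intro n hn
    cases n with
    | zero => omega
    | succ k => exact stirlingSeq'_pos k
  have hsa := stir_pos a ha
  have hsb := stir_pos b hb
  have hsab := stir_pos (a+b) hab
  have e1 := fact_eq a ha
  have e2 := fact_eq b hb
  have e3 := fact_eq (a+b) hab
  rw [hc, e1, e2, e3]
  have hqa : (0:ℝ) < Real.sqrt (2*a) := Real.sqrt_pos.2 (by positivity)
  have hqb : (0:ℝ) < Real.sqrt (2*b) := Real.sqrt_pos.2 (by positivity)
  have hqab : (0:ℝ) < Real.sqrt (2*(a+b)) := Real.sqrt_pos.2 (by positivity)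
  have he : (0:ℝ) < Real.exp 1 := Real.exp_pos 1
  push_cast
  field_simp
  rw [div_pow, div_pow, div_pow, div_pow, div_pow, pow_add, pow_add]
  field_simp

lemma key_ineq (a b : ℕ) (ha : 1 ≤ a) (hb : 1 ≤ b) :
    1 ≤ (Real.exp 1 ^ 2 / Real.sqrt (2*π)) * Real.sqrt a *
      (((a+b).choose a : ℝ) * ((a:ℝ)/(a+b))^a * ((b:ℝ)/(a+b))^b) := by
  have hab : 1 ≤ a + b := le_trans ha (Nat.le_add_right a b)
  have h0a : (0:ℝ) < a := by exact_mod_cast ha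
  have h0b : (0:ℝ) < b := by exact_mod_cast hb
  have stir_pos : ∀ n : ℕ, 1 ≤ n → 0 < stirlingSeq n := by
    intro n hn
    cases n with
    | zero => omega
    | succ k => exact stirlingSeq'_pos k
  have stir_le' : ∀ n : ℕ, 1 ≤ n → stirlingSeq n ≤ Real.exp 1 / Real.sqrt 2 := by
    intro n hn
    cases n with
    | zero => omega
    | succ k => exact stir_le k
  have stir_ge' : ∀ n : ℕ, 1 ≤ n → Real.sqrt π ≤ stirlingSeq n := by
    intro n hn
    cases n with
    | zero => omega
    | succ k => exact stir_ge k
  rw [key_id a b ha hb]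
  have h1 : (Real.exp 1 ^ 2 / Real.sqrt (2*π)) * Real.sqrt a *
      (Real.sqrt π * Real.sqrt (2*b)
        / (Real.exp 1 / Real.sqrt 2 * Real.sqrt (2*a) * (Real.exp 1 / Real.sqrt 2 * Real.sqrt (2*b)))) = 1 := by
    rw [show (2:ℝ)*π = 2*π from rfl, Real.sqrt_mul (by norm_num) π,
        Real.sqrt_mul (by norm_num) (a:ℝ), Real.sqrt_mul (by norm_num) (b:ℝ)]
    have h2 : Real.sqrt 2 * Real.sqrt 2 = 2 := Real.mul_self_sqrt (by norm_num)
    have hpi : (0:ℝ) < Real.sqrt π := Real.sqrt_pos.2 Real.pi_pos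
    have hsa : (0:ℝ) < Real.sqrt a := Real.sqrt_pos.2 h0a
    have hsb : (0:ℝ) < Real.sqrt b := Real.sqrt_pos.2 h0b
    have he : (0:ℝ) < Real.exp 1 := Real.exp_pos 1
    have h2' : (0:ℝ) < Real.sqrt 2 := Real.sqrt_pos.2 (by norm_num)
    have he2 : Real.exp 2 = Real.exp 1 * Real.exp 1 := by
      rw [← Real.exp_add]; norm_num
    field_simp
  have he : (0:ℝ) < Real.exp 1 := Real.exp_pos 1
  have h2' : (0:ℝ) < Real.sqrt 2 := Real.sqrt_pos.2 (by norm_num)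
  have hqa : (0:ℝ) < Real.sqrt (2*a) := Real.sqrt_pos.2 (by positivity)
  have hqb : (0:ℝ) < Real.sqrt (2*b) := Real.sqrt_pos.2 (by positivity)
  have hq : Real.sqrt (2*(b:ℝ)) ≤ Real.sqrt (2*((a:ℝ)+b)) := by
    apply Real.sqrt_le_sqrt; linarith
  have hA : 0 < stirlingSeq a * Real.sqrt (2*a) :=
    mul_pos (stir_pos a ha) hqa
  have hB : 0 < stirlingSeq b * Real.sqrt (2*b) :=
    mul_pos (stir_pos b hb) hqb
  have step : Real.sqrt π * Real.sqrt (2*b)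
      / (Real.exp 1 / Real.sqrt 2 * Real.sqrt (2*a) * (Real.exp 1 / Real.sqrt 2 * Real.sqrt (2*b)))
      ≤ stirlingSeq (a+b) * Real.sqrt (2*(a+b))
      / (stirlingSeq a * Real.sqrt (2*a) * (stirlingSeq b * Real.sqrt (2*b))) := by
    apply div_le_div₀
    · exact (mul_pos (stir_pos _ hab) (Real.sqrt_pos.2 (by positivity))).le
    · apply mul_le_mul (stir_ge' _ hab) (by push_cast; exact hq) hqb.le (stir_pos _ hab).le
    · exact mul_pos hA hB
    · apply mul_le_mul
      · exact mul_le_mul_of_nonneg_right (stir_le' a ha) hqa.le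
      · exact mul_le_mul_of_nonneg_right (stir_le' b hb) hqb.le
      · exact hB.le
      · positivity
  calc (1:ℝ) = Real.exp 1 ^ 2 / Real.sqrt (2*π) * Real.sqrt a *
      (Real.sqrt π * Real.sqrt (2*b)
        / (Real.exp 1 / Real.sqrt 2 * Real.sqrt (2*a) * (Real.exp 1 / Real.sqrt 2 * Real.sqrt (2*b)))) := h1.symm
    _ ≤ _ := by
      apply mul_le_mul_of_nonneg_left step (by positivity)

lemma key_ineq' (a b : ℕ) (ha : 1 ≤ a) :
    1 ≤ (Real.exp 1 ^ 2 / Real.sqrt (2*π)) * Real.sqrt a *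
      (((a+b).choose a : ℝ) * ((a:ℝ)/(a+b))^a * ((b:ℝ)/(a+b))^b) := by
  rcases Nat.eq_zero_or_pos b with hb | hb
  · subst hb
    have h0a : (0:ℝ) < a := by exact_mod_cast ha
    have h1 : ((a:ℝ)/((a:ℝ)+0))^a = 1 := by
      rw [add_zero, div_self (ne_of_gt h0a), one_pow]
    simp only [Nat.add_zero, Nat.choose_self, Nat.cast_one, Nat.cast_zero, pow_zero,
      h1, mul_one, one_mul]
    have hsa : (1:ℝ) ≤ Real.sqrt a := Real.one_le_sqrt.2 (by exact_mod_cast ha)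
    have hC : (1:ℝ) ≤ Real.exp 1 ^ 2 / Real.sqrt (2*π) := by
      rw [le_div_iff₀ (Real.sqrt_pos.2 (by positivity))]
      have h8 : Real.sqrt (2*π) ≤ 3 := by
        have : Real.sqrt (2*π) ≤ Real.sqrt 9 := by
          apply Real.sqrt_le_sqrt
          nlinarith [Real.pi_le_four]
        rwa [show (9:ℝ) = 3^2 by norm_num, Real.sqrt_sq (by norm_num)] at this
      have he : (2:ℝ) ≤ Real.exp 1 := by
        nlinarith [Real.exp_one_gt_d9]
      nlinarith
    calc (1:ℝ) = 1 * 1 := (mul_one 1).symm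
      _ ≤ _ := mul_le_mul hC hsa zero_le_one (by positivity)
  · exact key_ineq a b ha hb

theorem stmt18 :
    ∃ C : ℝ, 0 < C ∧
      ∀ (N m : ℕ), 1 ≤ m → m ≤ N →
        ∀ E : Finset (Finset (Fin N)),
          ((E.filter fun S => S.card = m).card : ℝ) / (N.choose m)
            ≤ C * Real.sqrt m *
              ∑ S ∈ E, ((m : ℝ) / N) ^ S.card * (1 - (m : ℝ) / N) ^ (N - S.card) := by
  refine ⟨Real.exp 1 ^ 2 / Real.sqrt (2*π), by positivity, ?_⟩
  intro N m hm hmN E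
  set C := Real.exp 1 ^ 2 / Real.sqrt (2*π) with hCdef
  have hN : 1 ≤ N := le_trans hm hmN
  have hN0 : (0:ℝ) < N := by exact_mod_cast hN
  have hδ0 : (0:ℝ) ≤ (m:ℝ)/N := by positivity
  have hδ1 : (m:ℝ)/N ≤ 1 := by
    rw [div_le_one hN0]; exact_mod_cast hmN
  have hchoose : (0:ℝ) < N.choose m := by exact_mod_cast Nat.choose_pos hmN
  set δ := (m:ℝ)/N with hδdef
  have hsub : ((N - m : ℕ) : ℝ)/N = 1 - δ := by
    rw [Nat.cast_sub hmN, hδdef]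
    field_simp
  have hkey : 1 / (N.choose m : ℝ) ≤ C * Real.sqrt m * (δ^m * (1-δ)^(N-m)) := by
    have h := key_ineq' m (N-m) hm
    rw [Nat.add_sub_cancel' hmN] at h
    push_cast [Nat.cast_sub hmN] at h hsub ⊢
    have hNN : (m:ℝ) + ((N:ℝ) - m) = N := by ring
    rw [hNN, hsub] at h
    rw [div_le_iff₀ hchoose]
    calc (1:ℝ) ≤ _ := h
      _ = C * Real.sqrt m * (δ ^ m * (1 - δ) ^ (N - m)) * (N.choose m : ℝ) := by
        rw [hCdef]; ring
  have hterm : ∀ S : Finset (Fin N), 0 ≤ δ ^ S.card * (1-δ) ^ (N - S.card) := by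
    intro S
    exact mul_nonneg (pow_nonneg hδ0 _) (pow_nonneg (by linarith) _)
  have hsum : ((E.filter fun S => S.card = m).card : ℝ) * (δ^m * (1-δ)^(N-m))
      ≤ ∑ S ∈ E, δ ^ S.card * (1-δ) ^ (N - S.card) := by
    calc ((E.filter fun S => S.card = m).card : ℝ) * (δ^m * (1-δ)^(N-m))
        = ∑ S ∈ E.filter fun S => S.card = m, δ ^ S.card * (1-δ) ^ (N - S.card) := by
          rw [Finset.sum_congr rfl (fun S hS => by
            rw [(Finset.mem_filter.1 hS).2]), Finset.sum_const, nsmul_eq_mul]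
      _ ≤ _ := Finset.sum_le_sum_of_subset_of_nonneg (Finset.filter_subset _ _)
          (fun S _ _ => hterm S)
  calc ((E.filter fun S => S.card = m).card : ℝ) / (N.choose m)
      = ((E.filter fun S => S.card = m).card : ℝ) * (1 / (N.choose m : ℝ)) := by ring
    _ ≤ ((E.filter fun S => S.card = m).card : ℝ) * (C * Real.sqrt m * (δ^m * (1-δ)^(N-m))) :=
        mul_le_mul_of_nonneg_left hkey (by positivity)
    _ = C * Real.sqrt m * (((E.filter fun S => S.card = m).card : ℝ) * (δ^m * (1-δ)^(N-m))) := by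
        ring
    _ ≤ C * Real.sqrt m * ∑ S ∈ E, δ ^ S.card * (1-δ) ^ (N - S.card) :=
        mul_le_mul_of_nonneg_left hsum (by positivity)
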